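/- The permutations that can be obtained in at most p steps in the whole genome duplication - random loss model are exactly those whose number of descents is at most 2^p − 1: a permutation σ of size n is obtainable from the identity 1 2 ... n in at most p duplication-loss steps if and only if desc(σ) ≤ 2^p − 1. -/

import Mathlib

/-- `σ` has a descent at (0-based) position `i`, i.e. `σ i > σ (i+1)`. -/
def IsDescentAt {n : ℕ} (σ : Equiv.Perm (Fin n)) (i : ℕ) : Prop :=
  ∃ h : i + 1 < n, σ ⟨i + 1, h⟩ < σ ⟨i, Nat.lt_of_succ_lt h⟩

/-- The number of descents of `σ`. -/
noncomputable def descNum {n : ℕ} (σ : Equiv.Perm (Fin n)) : ℕ :=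
  {i : ℕ | IsDescentAt σ i}.ncard

/-- One step of the whole genome duplication - random loss model. -/
def DLStep {n : ℕ} (σ σ' : Equiv.Perm (Fin n)) : Prop :=
  ∃ (m : ℕ) (τ : Equiv.Perm (Fin n)),
    (∀ i j : Fin n, (i : ℕ) < m → (j : ℕ) < m → i < j → τ i < τ j) ∧
    (∀ i j : Fin n, m ≤ (i : ℕ) → m ≤ (j : ℕ) → i < j → τ i < τ j) ∧
    ∀ i, σ' i = σ (τ i)

/-- `σ` is obtainable from the identity permutation in at most `p` duplication-loss steps. -/
def ObtainableIn {n : ℕ} (p : ℕ) (σ : Equiv.Perm (Fin n)) : Prop :=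
  ∃ (q : ℕ) (c : ℕ → Equiv.Perm (Fin n)), q ≤ p ∧ c 0 = 1 ∧ c q = σ ∧
    ∀ i, i < q → DLStep (c i) (c (i + 1))

open Classical in

noncomputable def descFinset {n : ℕ} (σ : Equiv.Perm (Fin n)) : Finset ℕ :=
  (Finset.range n).filter (fun i => IsDescentAt σ i)

lemma mem_descFinset {n : ℕ} (σ : Equiv.Perm (Fin n)) (i : ℕ) :
    i ∈ descFinset σ ↔ IsDescentAt σ i := by
  classical
  simp only [descFinset, Finset.mem_filter, Finset.mem_range, and_iff_right_iff_imp]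
  rintro ⟨h, -⟩
  omega

lemma descNum_eq {n : ℕ} (σ : Equiv.Perm (Fin n)) : descNum σ = (descFinset σ).card := by
  rw [descNum, ← Set.ncard_coe_finset]
  congr 1
  ext i
  simp [mem_descFinset]

lemma mono_of_no_descent {n : ℕ} (σ : Equiv.Perm (Fin n)) :
    ∀ (b a : ℕ) (hab : a < b) (hb : b < n),
    (∀ i, a ≤ i → i < b → ¬ IsDescentAt σ i) →
    σ ⟨a, lt_trans hab hb⟩ < σ ⟨b, hb⟩ := by
  intro b
  induction b with
  | zero => omega
  | succ b ih =>
    intro a hab hb h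
    have hnd : ¬ IsDescentAt σ b := h b (by omega) (by omega)
    have hb' : b < n := by omega
    have hble : σ ⟨b, hb'⟩ < σ ⟨b + 1, hb⟩ := by
      rcases lt_trichotomy (σ ⟨b, hb'⟩) (σ ⟨b + 1, hb⟩) with h1 | h1 | h1
      · exact h1
      · exact absurd (σ.injective h1) (by simp [Fin.ext_iff])
      · exact absurd ⟨hb, h1⟩ hnd
    rcases Nat.lt_or_ge a b with h2 | h2
    · exact lt_trans (ih a h2 hb' (fun i h3 h4 => h i h3 (by omega))) hble
    · have : a = b := by omega
      subst this; exact hble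

lemma exists_descent {n : ℕ} (σ : Equiv.Perm (Fin n)) (a b : Fin n) (hab : a < b)
    (hv : σ b < σ a) : ∃ j, (a : ℕ) ≤ j ∧ j < (b : ℕ) ∧ IsDescentAt σ j := by
  by_contra h
  push_neg at h
  have := mono_of_no_descent σ b a hab b.isLt (fun i h1 h2 => h i h1 h2)
  simp only [Fin.eta] at this
  exact absurd hv (not_lt.mpr this.le)

lemma descNum_one {n : ℕ} : descNum (1 : Equiv.Perm (Fin n)) = 0 := by
  rw [descNum_eq, Finset.card_eq_zero, Finset.eq_empty_iff_forall_notMem]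
  intro i hi
  rw [mem_descFinset] at hi
  obtain ⟨h, hlt⟩ := hi
  simp [Fin.lt_def] at hlt

lemma block_card_le {n : ℕ} (σ : Equiv.Perm (Fin n)) (τ : Equiv.Perm (Fin n)) (S : Finset ℕ)
    (hS : ∀ i ∈ S, ∃ h : i + 1 < n,
      (τ ⟨i, Nat.lt_of_succ_lt h⟩ : ℕ) < τ ⟨i + 1, h⟩ ∧
      σ (τ ⟨i + 1, h⟩) < σ (τ ⟨i, Nat.lt_of_succ_lt h⟩))
    (hmono : ∀ i ∈ S, ∀ i' ∈ S, ∀ (h : i + 1 < n) (h' : i' + 1 < n), i < i' →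
      (τ ⟨i + 1, h⟩ : ℕ) ≤ τ ⟨i', Nat.lt_of_succ_lt h'⟩) :
    S.card ≤ (descFinset σ).card := by
  classical
  set P : ℕ → Prop := fun i => ∃ j, j ∈ descFinset σ ∧ ∃ h : i + 1 < n,
      (τ ⟨i, Nat.lt_of_succ_lt h⟩ : ℕ) ≤ j ∧ j < (τ ⟨i + 1, h⟩ : ℕ) with hPdef
  have hP : ∀ i ∈ S, P i := by
    intro i hi
    obtain ⟨h, hlt, hv⟩ := hS i hi
    obtain ⟨j, hj1, hj2, hj3⟩ := exists_descent σ _ _ (by exact hlt) hv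
    exact ⟨j, (mem_descFinset σ j).mpr hj3, h, hj1, hj2⟩
  set f : ℕ → ℕ := fun i => if h : P i then h.choose else 0 with hfdef
  have hspec : ∀ i ∈ S, f i ∈ descFinset σ ∧ ∃ h : i + 1 < n,
      (τ ⟨i, Nat.lt_of_succ_lt h⟩ : ℕ) ≤ f i ∧ f i < (τ ⟨i + 1, h⟩ : ℕ) := by
    intro i hi
    have hp := hP i hi
    simp only [hfdef, dif_pos hp]
    exact hp.choose_spec
  apply Finset.card_le_card_of_injOn f (fun i hi => (hspec i hi).1)
  intro i hi i' hi' hfe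
  by_contra hne
  rcases lt_or_gt_of_ne hne with hlt | hlt
  · obtain ⟨-, h, -, hub⟩ := hspec i hi
    obtain ⟨-, h', hlb, -⟩ := hspec i' hi'
    have := hmono i hi i' hi' h h' hlt
    omega
  · obtain ⟨-, h, -, hub⟩ := hspec i' hi'
    obtain ⟨-, h', hlb, -⟩ := hspec i hi
    have := hmono i' hi' i hi h h' hlt
    omega

lemma descNum_step {n : ℕ} {σ σ' : Equiv.Perm (Fin n)} (h : DLStep σ σ') :
    descNum σ' ≤ 2 * descNum σ + 1 := by
  classical
  obtain ⟨m, τ, h1, h2, h3⟩ := h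
  rw [descNum_eq, descNum_eq]
  set S₁ := (descFinset σ').filter (fun i => i + 1 < m) with hS₁
  set S₂ := (descFinset σ').filter (fun i => m ≤ i) with hS₂
  have hdesc : ∀ i ∈ descFinset σ', ∃ h : i + 1 < n,
      σ (τ ⟨i + 1, h⟩) < σ (τ ⟨i, Nat.lt_of_succ_lt h⟩) := by
    intro i hi
    obtain ⟨h, hlt⟩ := (mem_descFinset σ' i).mp hi
    refine ⟨h, ?_⟩
    rw [← h3, ← h3]
    exact hlt
  have hsub : descFinset σ' ⊆ S₁ ∪ S₂ ∪ {m - 1} := by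
    intro i hi
    simp only [Finset.mem_union, Finset.mem_filter, Finset.mem_singleton, hS₁, hS₂]
    rcases Nat.lt_trichotomy (i + 1) m with hc | hc | hc
    · exact Or.inl (Or.inl ⟨hi, hc⟩)
    · exact Or.inr (by omega)
    · exact Or.inl (Or.inr ⟨hi, by omega⟩)
  have hb1 : S₁.card ≤ (descFinset σ).card := by
    apply block_card_le σ τ
    · intro i hi
      rw [hS₁, Finset.mem_filter] at hi
      obtain ⟨h, hv⟩ := hdesc i hi.1
      refine ⟨h, ?_, hv⟩
      have := h1 ⟨i, Nat.lt_of_succ_lt h⟩ ⟨i + 1, h⟩ (by simpa using by omega) (by simpa using hi.2)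
        (by simp [Fin.lt_def])
      exact this
    · intro i hi i' hi' hh hh' hlt
      rw [hS₁, Finset.mem_filter] at hi hi'
      rcases Nat.lt_or_ge (i + 1) i' with hc | hc
      · exact le_of_lt (h1 ⟨i + 1, hh⟩ ⟨i', Nat.lt_of_succ_lt hh'⟩ (by simpa using hi.2)
          (by simp; omega) (by simp [Fin.lt_def]; omega))
      · have : i + 1 = i' := by omega
        subst this
        simp
  have hb2 : S₂.card ≤ (descFinset σ).card := by
    apply block_card_le σ τ
    · intro i hi
      rw [hS₂, Finset.mem_filter] at hi
      obtain ⟨h, hv⟩ := hdesc i hi.1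
      refine ⟨h, ?_, hv⟩
      exact h2 ⟨i, Nat.lt_of_succ_lt h⟩ ⟨i + 1, h⟩ (by simpa using hi.2) (by simp; omega)
        (by simp [Fin.lt_def])
    · intro i hi i' hi' hh hh' hlt
      rw [hS₂, Finset.mem_filter] at hi hi'
      rcases Nat.lt_or_ge (i + 1) i' with hc | hc
      · exact le_of_lt (h2 ⟨i + 1, hh⟩ ⟨i', Nat.lt_of_succ_lt hh'⟩ (by simp; omega)
          (by simpa using hi'.2) (by simp [Fin.lt_def]; omega))
      · have : i + 1 = i' := by omega
        subst this
        simp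
  calc (descFinset σ').card ≤ (S₁ ∪ S₂ ∪ {m - 1}).card := Finset.card_le_card hsub
    _ ≤ (S₁ ∪ S₂).card + 1 := by
        refine le_trans (Finset.card_union_le _ _) ?_
        simp
    _ ≤ S₁.card + S₂.card + 1 := by
        have := Finset.card_union_le S₁ S₂
        omega
    _ ≤ 2 * (descFinset σ).card + 1 := by omega

lemma step_exists {n : ℕ} (σ : Equiv.Perm (Fin n)) (k : ℕ) (hk : 0 < k)
    (hd : descNum σ + 1 ≤ 2 * k) :
    ∃ σ'' : Equiv.Perm (Fin n), descNum σ'' + 1 ≤ k ∧ DLStep σ'' σ := by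
  classical
  set r : ℕ → ℕ := fun a => ((Finset.range a).filter (fun i => IsDescentAt σ i)).card with hrdef
  have hr_mono : ∀ a b, a ≤ b → r a ≤ r b := fun a b hab =>
    Finset.card_le_card (Finset.filter_subset_filter _ (Finset.range_subset_range.mpr hab))
  have hr_le : ∀ a, r a ≤ descNum σ := by
    intro a; rw [descNum_eq]
    apply Finset.card_le_card
    intro i hi
    rw [Finset.mem_filter] at hi
    exact (mem_descFinset σ i).mpr hi.2
  have hr_lt : ∀ a, r a < 2 * k := fun a => by have := hr_le a; omega
  -- within a run (equal r values), σ is increasing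
  have hrun : ∀ a b (hab : a < b) (hb : b < n), r a = r b →
      σ ⟨a, lt_trans hab hb⟩ < σ ⟨b, hb⟩ := by
    intro a b hab hb hre
    apply mono_of_no_descent σ b a hab hb
    intro i h1 h2 hdesc
    have hstep : r i < r (i + 1) := by
      apply Finset.card_lt_card
      refine (Finset.ssubset_iff_of_subset
        (Finset.filter_subset_filter _ (Finset.range_subset_range.mpr (by omega)))).mpr ?_
      exact ⟨i, by simp [hdesc], by simp⟩
    have ha := hr_mono a i h1
    have hb2 := hr_mono (i + 1) b (by omega)
    omega
  set q : ℕ → ℕ := fun a => if r a < k then r a else r a - k with hqdef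
  have hq_lt : ∀ a, q a < k := by
    intro a
    have := hr_lt a
    simp only [hqdef]
    split <;> omega
  set key : Fin n → ℕ := fun i => q i.val * n + (σ i).val with hkeydef
  have key_lt : ∀ i j : Fin n, q i.val < q j.val → key i < key j := by
    intro i j h
    have h2 : q i.val * n + n ≤ q j.val * n := by
      calc q i.val * n + n = (q i.val + 1) * n := by ring
        _ ≤ q j.val * n := Nat.mul_le_mul_right n h
    calc key i < q i.val * n + n := Nat.add_lt_add_left (σ i).isLt _
      _ ≤ q j.val * n := h2
      _ ≤ key j := Nat.le_add_right _ _
  have key_le_q : ∀ i j : Fin n, key i ≤ key j → q i.val ≤ q j.val := by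
    intro i j h
    by_contra hc
    exact absurd h (not_le.mpr (key_lt j i (by omega)))
  have key_same_q : ∀ i j : Fin n, key i < key j → q i.val = q j.val → σ i < σ j := by
    intro i j h he
    rw [hkeydef] at h
    simp only [he] at h
    have := Nat.lt_of_add_lt_add_left h
    exact this
  have key_inj : Function.Injective key := by
    intro i j h
    have h1 : q i.val = q j.val := le_antisymm (key_le_q i j h.le) (key_le_q j i h.ge)
    have h2 : (σ i).val = (σ j).val := by
      rw [hkeydef] at h
      simp only [h1] at h
      exact Nat.add_left_cancel h
    exact σ.injective (Fin.ext h2)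
  set ρ : Equiv.Perm (Fin n) := Tuple.sort key with hρdef
  have hκ : StrictMono (key ∘ ρ) :=
    (Tuple.monotone_sort key).strictMono_of_injective (key_inj.comp ρ.injective)
  have htau : ∀ i j : Fin n, key i < key j → ρ⁻¹ i < ρ⁻¹ j := by
    intro i j h
    have : (key ∘ ρ) (ρ⁻¹ i) < (key ∘ ρ) (ρ⁻¹ j) := by
      simpa using h
    exact hκ.lt_iff_lt.mp this
  have hQmono : ∀ a b : Fin n, a ≤ b → q (ρ a).val ≤ q (ρ b).val := by
    intro a b hab
    rcases eq_or_lt_of_le hab with h | h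
    · subst h; exact le_rfl
    · exact key_le_q _ _ (hκ h).le
  set σ'' : Equiv.Perm (Fin n) := σ * ρ with hσdef
  set T : Finset (Fin n) := Finset.univ.filter (fun i : Fin n => r i.val < k) with hTdef
  set m : ℕ := T.card with hmdef
  have hseg : ∀ i : Fin n, r i.val < k ↔ (i : ℕ) < m := by
    intro i
    constructor
    · intro h
      have hsub : Finset.Iic i ⊆ T := by
        intro j hj
        rw [Finset.mem_Iic] at hj
        rw [hTdef, Finset.mem_filter]
        exact ⟨Finset.mem_univ _, lt_of_le_of_lt (hr_mono _ _ hj) h⟩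
      have := Finset.card_le_card hsub
      rw [Fin.card_Iic] at this
      omega
    · intro h
      by_contra hc
      have hsub : T ⊆ Finset.Iio i := by
        intro j hj
        rw [hTdef, Finset.mem_filter] at hj
        rw [Finset.mem_Iio]
        by_contra hc2
        exact hc (lt_of_le_of_lt (hr_mono _ _ (not_lt.mp hc2)) hj.2)
      have := Finset.card_le_card hsub
      rw [Fin.card_Iio] at this
      omega
  -- key comparison on blocks
  have hkey_blk : ∀ i j : Fin n, i < j → (q i.val = r i.val ∧ q j.val = r j.val) ∨
      (q i.val = r i.val - k ∧ q j.val = r j.val - k ∧ k ≤ r i.val ∧ k ≤ r j.val) →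
      key i < key j := by
    intro i j hij hcase
    have hrle := hr_mono i.val j.val (le_of_lt hij)
    rcases hcase with ⟨hqi, hqj⟩ | ⟨hqi, hqj, hki, hkj⟩
    · rcases eq_or_lt_of_le hrle with he | hlt
      · have hs := hrun i.val j.val hij j.isLt he
        simp only [Fin.eta] at hs
        have hs' : (σ i).val < (σ j).val := hs
        have hq2 : q i.val = q j.val := by rw [hqi, hqj, he]
        show q i.val * n + (σ i).val < q j.val * n + (σ j).val
        rw [hq2]
        exact Nat.add_lt_add_left hs' _
      · exact key_lt i j (by omega)
    · rcases eq_or_lt_of_le hrle with he | hlt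
      · have hs := hrun i.val j.val hij j.isLt he
        simp only [Fin.eta] at hs
        have hs' : (σ i).val < (σ j).val := hs
        have hq2 : q i.val = q j.val := by rw [hqi, hqj, he]
        show q i.val * n + (σ i).val < q j.val * n + (σ j).val
        rw [hq2]
        exact Nat.add_lt_add_left hs' _
      · exact key_lt i j (by omega)
  have hstep : DLStep σ'' σ := by
    refine ⟨m, ρ⁻¹, ?_, ?_, ?_⟩
    · intro i j hi hj hij
      have hri : r i.val < k := (hseg i).mpr hi
      have hrj : r j.val < k := (hseg j).mpr hj
      apply htau
      apply hkey_blk i j hij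
      left
      constructor <;> simp [hqdef, hri, hrj]
    · intro i j hi hj hij
      have hri : ¬ r i.val < k := fun h => by have := (hseg i).mp h; omega
      have hrj : ¬ r j.val < k := fun h => by have := (hseg j).mp h; omega
      apply htau
      apply hkey_blk i j hij
      right
      refine ⟨by simp [hqdef, hri], by simp [hqdef, hrj], by omega, by omega⟩
    · intro i
      simp [hσdef]
  refine ⟨σ'', ?_, hstep⟩
  -- counting descents of σ''
  have hjump : ∀ j ∈ descFinset σ'', ∃ h : j + 1 < n,
      q (ρ ⟨j, Nat.lt_of_succ_lt h⟩).val < q (ρ ⟨j + 1, h⟩).val := by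
    intro j hj
    obtain ⟨h, hlt⟩ := (mem_descFinset σ'' j).mp hj
    refine ⟨h, ?_⟩
    have hmk : (⟨j, Nat.lt_of_succ_lt h⟩ : Fin n) < ⟨j + 1, h⟩ := by simp [Fin.lt_def]
    have hkey : key (ρ ⟨j, Nat.lt_of_succ_lt h⟩) < key (ρ ⟨j + 1, h⟩) := hκ hmk
    have hle := hQmono _ _ hmk.le
    rcases eq_or_lt_of_le hle with he | hlt2
    · exfalso
      have := key_same_q _ _ hkey he
      rw [hσdef] at hlt
      simp only [Equiv.Perm.mul_apply] at hlt
      exact absurd hlt (not_lt.mpr this.le)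
    · exact hlt2
  set g : ℕ → ℕ := fun j => if h : j + 1 < n then q (ρ ⟨j + 1, h⟩).val else 0 with hgdef
  have hcard : (descFinset σ'').card ≤ (Finset.Ico 1 k).card := by
    apply Finset.card_le_card_of_injOn g
    · intro j hj
      obtain ⟨h, hlt⟩ := hjump j hj
      rw [Finset.mem_coe, Finset.mem_Ico, hgdef]
      simp only [dif_pos h]
      exact ⟨by omega, hq_lt _⟩
    · intro j hj j' hj' hfe
      by_contra hne
      obtain ⟨h, hlt⟩ := hjump j hj
      obtain ⟨h', hlt'⟩ := hjump j' hj'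
      rcases lt_or_gt_of_ne hne with hc | hc
      · have hmono := hQmono ⟨j + 1, h⟩ ⟨j', Nat.lt_of_succ_lt h'⟩ (by simp [Fin.le_def]; omega)
        rw [hgdef] at hfe
        simp only [dif_pos h, dif_pos h'] at hfe
        omega
      · have hmono := hQmono ⟨j' + 1, h'⟩ ⟨j, Nat.lt_of_succ_lt h⟩ (by simp [Fin.le_def]; omega)
        rw [hgdef] at hfe
        simp only [dif_pos h, dif_pos h'] at hfe
        omega
  rw [descNum_eq]
  rw [Nat.card_Ico] at hcard
  omega

lemma eq_one_of_descNum_zero {n : ℕ} (σ : Equiv.Perm (Fin n)) (h : descNum σ = 0) : σ = 1 := by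
  have hnd : ∀ i, ¬ IsDescentAt σ i := by
    rw [descNum_eq, Finset.card_eq_zero] at h
    intro i hi
    have := (mem_descFinset σ i).mpr hi
    simp [h] at this
  have hsm : StrictMono σ := by
    intro a b hab
    have := mono_of_no_descent σ b.val a.val hab b.isLt (fun i _ _ => hnd i)
    simpa using this
  have hfe : ⇑σ = id := by
    have hinst : WellFoundedLT (Fin n) := inferInstance
    exact (StrictMono.range_inj (β := Fin n) (γ := Fin n) hsm
      (strictMono_id (α := Fin n))).mp (by rw [σ.surjective.range_eq, Set.range_id])
  ext x
  simp [congrFun hfe x]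

lemma desc_of_obtainable {n : ℕ} (p : ℕ) (σ : Equiv.Perm (Fin n)) (h : ObtainableIn p σ) :
    descNum σ + 1 ≤ 2 ^ p := by
  obtain ⟨qq, c, hqp, hc0, hcq, hstep⟩ := h
  have key : ∀ i, i ≤ qq → descNum (c i) + 1 ≤ 2 ^ i := by
    intro i
    induction i with
    | zero => intro _; rw [hc0, descNum_one]; norm_num
    | succ i ih =>
      intro hle
      have h1 := ih (by omega)
      have h2 := descNum_step (hstep i (by omega))
      have h3 : (2 : ℕ) ^ (i + 1) = 2 * 2 ^ i := by ring
      omega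
  have := key qq le_rfl
  rw [hcq] at this
  exact le_trans this (Nat.pow_le_pow_right (by norm_num) hqp)

lemma obtainable_of_desc {n : ℕ} :
    ∀ (p : ℕ) (σ : Equiv.Perm (Fin n)), descNum σ + 1 ≤ 2 ^ p → ObtainableIn p σ := by
  intro p
  induction p with
  | zero =>
    intro σ h
    have h0 : descNum σ = 0 := by simpa using h
    rw [eq_one_of_descNum_zero σ h0]
    exact ⟨0, fun _ => 1, le_rfl, rfl, rfl, fun i hi => absurd hi (Nat.not_lt_zero i)⟩
  | succ p ih =>
    intro σ h
    obtain ⟨σ'', hdesc, hstep⟩ := step_exists σ (2 ^ p) (Nat.pow_pos (by norm_num))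
      (by rw [pow_succ] at h; omega)
    obtain ⟨qq, c, hqp, hc0, hcq, hsteps⟩ := ih σ'' hdesc
    refine ⟨qq + 1, fun i => if i ≤ qq then c i else σ, by omega, ?_, ?_, ?_⟩
    · simp [hc0]
    · simp
    · intro i hi
      rcases Nat.lt_or_ge i qq with h2 | h2
      · simp only [if_pos (le_of_lt h2), if_pos (by omega : i + 1 ≤ qq)]
        exact hsteps i h2
      · have h3 : i ≤ qq := by omega
        have h4 : ¬ i + 1 ≤ qq := by omega
        simp only [if_pos h3, if_neg h4]
        have h5 : c i = σ'' := by rw [← hcq]; congr 1; omega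
        rw [h5]
        exact hstep

/-- A permutation is obtainable in at most `p` steps in the whole genome duplication -
random loss model if and only if its number of descents is at most `2 ^ p - 1`. -/
theorem obtainable_iff_descNum_le {n : ℕ} (p : ℕ) (σ : Equiv.Perm (Fin n)) :
    ObtainableIn p σ ↔ descNum σ ≤ 2 ^ p - 1 := by
  have hpow : 1 ≤ 2 ^ p := Nat.one_le_two_pow
  constructor
  · intro h
    have := desc_of_obtainable p σ h
    omega
  · intro h
    exact obtainable_of_desc p σ (by omega)
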